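/- For γ > 0 and a real symmetric matrix A with eigendecomposition A = P·diag(d)·Pᵀ, the matrix Z = P·diag(Φ(d))·Pᵀ where Φ(x) = (√(x²+4γ)+x)/2 applied entrywise, is the unique positive definite minimizer over Z ≻ 0 of -γ·log det(Z) + (1/2)·‖Z - A‖_F². -/

import Mathlib

open Matrix BigOperators Finset

-- PosDef congruence
lemma posdef_congr {r : ℕ} (W B : Matrix (Fin r) (Fin r) ℝ) (hW : W.PosDef)
    (hB : ∀ x : Fin r → ℝ, x ≠ 0 → B *ᵥ x ≠ 0) : (Bᵀ * W * B).PosDef := by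
  have h1 : (Bᴴ * W * B).PosDef := by
    rw [posDef_iff_dotProduct_mulVec] at hW ⊢
    refine ⟨isHermitian_conjTranspose_mul_mul B hW.1, fun x hx => ?_⟩
    simpa only [star_mulVec, dotProduct_mulVec, vecMul_vecMul] using hW.2 (hB x hx)
  simpa [conjTranspose_eq_transpose_of_trivial] using h1

-- trace = sum of eigenvalues (real case)
lemma trace_eq_sum_eig {r : ℕ} (X : Matrix (Fin r) (Fin r) ℝ) (hX : X.IsHermitian) :
    X.trace = ∑ i, hX.eigenvalues i := by
  simpa using hX.trace_eq_sum_eigenvalues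

-- log det ≤ trace - r
lemma logdet_le {r : ℕ} (X : Matrix (Fin r) (Fin r) ℝ) (hX : X.PosDef) :
    Real.log X.det ≤ X.trace - r := by
  have hev := hX.eigenvalues_pos
  have hdet : X.det = ∏ i, hX.1.eigenvalues i := by
    rw [hX.1.det_eq_prod_eigenvalues]; simp
  rw [hdet, trace_eq_sum_eig X hX.1,
    Real.log_prod (fun i _ => (hev i).ne')]
  have : ∀ i ∈ Finset.univ, Real.log (hX.1.eigenvalues i) ≤ hX.1.eigenvalues i - 1 :=
    fun i _ => Real.log_le_sub_one_of_pos (hev i)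
  calc ∑ i, Real.log (hX.1.eigenvalues i) ≤ ∑ i, (hX.1.eigenvalues i - 1) :=
        Finset.sum_le_sum this
    _ = ∑ i, hX.1.eigenvalues i - r := by
        rw [Finset.sum_sub_distrib]; simp

-- scaled logdet
lemma logdet_le_scaled {r : ℕ} (W : Matrix (Fin r) (Fin r) ℝ) (hW : W.PosDef)
    (Φ : Fin r → ℝ) (hΦ : ∀ i, 0 < Φ i) :
    Real.log W.det ≤ (∑ i, W i i / Φ i) - r + ∑ i, Real.log (Φ i) := by
  set q : Fin r → ℝ := fun i => (Real.sqrt (Φ i))⁻¹ with hq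
  have hq0 : ∀ i, q i ≠ 0 := fun i => inv_ne_zero (Real.sqrt_pos.2 (hΦ i)).ne'
  have hqq : ∀ i, q i * q i = (Φ i)⁻¹ := by
    intro i
    rw [hq]; simp only
    rw [← mul_inv, Real.mul_self_sqrt (hΦ i).le]
  set Q := Matrix.diagonal q with hQ
  have hQT : Qᵀ = Q := Matrix.diagonal_transpose q
  have hX : (Qᵀ * W * Q).PosDef := by
    refine posdef_congr W Q hW (fun x hx => ?_)
    intro h
    apply hx
    funext i
    have := congrFun h i
    simp only [Matrix.mulVec_diagonal, hQ] at this
    have := mul_eq_zero.mp this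
    rcases this with h1 | h1
    · exact absurd h1 (hq0 i)
    · exact h1
  have hXdet : (Qᵀ * W * Q).det = W.det * (∏ i, Φ i)⁻¹ := by
    rw [Matrix.det_mul, Matrix.det_mul, hQT, hQ, Matrix.det_diagonal, ← Finset.prod_inv_distrib]
    rw [show (∏ i, q i) * W.det * ∏ i, q i = W.det * ∏ i, (q i * q i) by
      rw [Finset.prod_mul_distrib]; ring]
    congr 1
    exact Finset.prod_congr rfl (fun i _ => hqq i)
  have hXtr : (Qᵀ * W * Q).trace = ∑ i, W i i / Φ i := by
    rw [Matrix.trace]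
    apply Finset.sum_congr rfl
    intro i _
    simp only [Matrix.diag_apply, hQT, hQ, Matrix.diagonal_transpose, Matrix.mul_diagonal, Matrix.diagonal_mul]
    rw [show q i * W i i * q i = W i i * (q i * q i) by ring, hqq i, div_eq_mul_inv]
  have h := logdet_le _ hX
  rw [hXdet, hXtr] at h
  have hpΦ : (0:ℝ) < ∏ i, Φ i := Finset.prod_pos (fun i _ => hΦ i)
  rw [Real.log_mul hW.det_pos.ne' (by positivity), Real.log_inv,
    Real.log_prod (fun i _ => (hΦ i).ne')] at h
  linarith

-- scalar identity
lemma scalar_id (γ d φ w : ℝ) (hφ : 0 < φ) (h : φ * (φ - d) = γ) :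
    (1/2)*(w - d)^2 = (1/2)*(w - φ)^2 + (1/2)*(φ - d)^2 + γ * (w / φ) - γ := by
  have hd : d = φ - γ / φ := by field_simp at h ⊢; linarith
  subst hd
  field_simp
  ring

-- core inequality
lemma core_ineq {r : ℕ} (γ : ℝ) (hγ : 0 < γ) (d Φ : Fin r → ℝ)
    (hΦp : ∀ i, 0 < Φ i) (hΦ : ∀ i, Φ i * (Φ i - d i) = γ)
    (W : Matrix (Fin r) (Fin r) ℝ) (hW : W.PosDef) :
    -γ * Real.log (∏ i, Φ i) + (1/2) * ∑ i, (Φ i - d i)^2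
      + ((1/2) * ∑ i, (W i i - Φ i)^2
        + (1/2) * ∑ i, ∑ j ∈ Finset.univ.erase i, (W i j)^2)
    ≤ -γ * Real.log W.det + (1/2) * ∑ i, ∑ j, (W i j - Matrix.diagonal d i j)^2 := by
  have hlog := logdet_le_scaled W hW Φ hΦp
  have hsplit : ∑ i, ∑ j, (W i j - Matrix.diagonal d i j)^2
      = ∑ i, ((W i i - d i)^2 + ∑ j ∈ Finset.univ.erase i, (W i j)^2) := by
    refine Finset.sum_congr rfl (fun i _ => ?_)
    rw [← Finset.add_sum_erase _ _ (Finset.mem_univ i), Matrix.diagonal_apply_eq]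
    congr 1
    refine Finset.sum_congr rfl (fun j hj => ?_)
    rw [Matrix.diagonal_apply_ne' d (Finset.ne_of_mem_erase hj), sub_zero]
  have hsum : ∑ i, (W i i - d i)^2
      = ∑ i, (W i i - Φ i)^2 + ∑ i, (Φ i - d i)^2 + 2 * γ * (∑ i, W i i / Φ i)
        - 2 * γ * r := by
    have := fun i => scalar_id γ (d i) (Φ i) (W i i) (hΦp i) (hΦ i)
    have h2 : ∑ i, (1/2)*(W i i - d i)^2
        = ∑ i, ((1/2)*(W i i - Φ i)^2 + (1/2)*(Φ i - d i)^2 + γ * (W i i / Φ i) - γ) :=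
      Finset.sum_congr rfl (fun i _ => this i)
    simp only [Finset.sum_add_distrib, Finset.sum_sub_distrib, ← Finset.mul_sum,
      Finset.sum_const, Finset.card_univ, Fintype.card_fin, nsmul_eq_mul] at h2
    linarith
  have hlogprod : Real.log (∏ i, Φ i) = ∑ i, Real.log (Φ i) :=
    Real.log_prod (fun i _ => (hΦp i).ne')
  rw [hsplit, hlogprod, Finset.sum_add_distrib]
  have hmul := mul_le_mul_of_nonneg_left hlog hγ.le
  linarith

-- Frobenius invariance
lemma frob {r : ℕ} (P : Matrix (Fin r) (Fin r) ℝ) (hP : Pᵀ * P = 1)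
    (M : Matrix (Fin r) (Fin r) ℝ) :
    ∑ i, ∑ j, ((P * M * Pᵀ) i j)^2 = ∑ i, ∑ j, (M i j)^2 := by
  have key : ∀ N : Matrix (Fin r) (Fin r) ℝ, ∑ i, ∑ j, (N i j)^2 = (N * Nᵀ).trace := by
    intro N
    simp [Matrix.trace, Matrix.diag, Matrix.mul_apply, sq]
  have hcan : ∀ X : Matrix (Fin r) (Fin r) ℝ, Pᵀ * (P * X) = X := by
    intro X; rw [← Matrix.mul_assoc, hP, Matrix.one_mul]
  rw [key, key]
  have e1 : (P * M * Pᵀ) * (P * M * Pᵀ)ᵀ = P * ((M * Mᵀ) * Pᵀ) := by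
    rw [Matrix.transpose_mul, Matrix.transpose_mul, Matrix.transpose_transpose]
    simp only [Matrix.mul_assoc, hcan]
  rw [e1, Matrix.trace_mul_comm, Matrix.mul_assoc, hP, Matrix.mul_one]

lemma diag_sq_sum {r : ℕ} (v : Fin r → ℝ) :
    ∑ i, ∑ j, ((Matrix.diagonal v) i j)^2 = ∑ i, (v i)^2 := by
  refine Finset.sum_congr rfl (fun i _ => ?_)
  rw [Finset.sum_eq_single i (fun j _ hj => by
    rw [Matrix.diagonal_apply_ne' v hj]; ring) (by simp)]
  rw [Matrix.diagonal_apply_eq]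

theorem stmt15 {r : ℕ} (γ : ℝ) (hγ : 0 < γ)
    (A P : Matrix (Fin r) (Fin r) ℝ) (d : Fin r → ℝ)
    (hP : Pᵀ * P = 1)
    (hA : A = P * Matrix.diagonal d * Pᵀ) :
    (P * Matrix.diagonal (fun i => (Real.sqrt ((d i) ^ 2 + 4 * γ) + d i) / 2) * Pᵀ).PosDef ∧
    ∀ Z : Matrix (Fin r) (Fin r) ℝ, Z.PosDef →
      (-γ * Real.log (P * Matrix.diagonal (fun i => (Real.sqrt ((d i) ^ 2 + 4 * γ) + d i) / 2) * Pᵀ).det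
          + (1 / 2) * ∑ i, ∑ j,
              ((P * Matrix.diagonal (fun i => (Real.sqrt ((d i) ^ 2 + 4 * γ) + d i) / 2) * Pᵀ) i j - A i j) ^ 2
        ≤ -γ * Real.log Z.det + (1 / 2) * ∑ i, ∑ j, (Z i j - A i j) ^ 2) ∧
      (-γ * Real.log Z.det + (1 / 2) * ∑ i, ∑ j, (Z i j - A i j) ^ 2
          = -γ * Real.log (P * Matrix.diagonal (fun i => (Real.sqrt ((d i) ^ 2 + 4 * γ) + d i) / 2) * Pᵀ).det
            + (1 / 2) * ∑ i, ∑ j,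
                ((P * Matrix.diagonal (fun i => (Real.sqrt ((d i) ^ 2 + 4 * γ) + d i) / 2) * Pᵀ) i j - A i j) ^ 2 →
        Z = P * Matrix.diagonal (fun i => (Real.sqrt ((d i) ^ 2 + 4 * γ) + d i) / 2) * Pᵀ) := by
  set Φ : Fin r → ℝ := fun i => (Real.sqrt ((d i) ^ 2 + 4 * γ) + d i) / 2 with hΦdef
  have hs : ∀ i, (Real.sqrt (d i ^ 2 + 4 * γ)) ^ 2 = d i ^ 2 + 4 * γ :=
    fun i => Real.sq_sqrt (by positivity)
  have habs : ∀ i, |d i| < Real.sqrt (d i ^ 2 + 4 * γ) := by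
    intro i
    rw [← Real.sqrt_sq_eq_abs]
    exact Real.sqrt_lt_sqrt (sq_nonneg _) (by linarith)
  have hΦp : ∀ i, 0 < Φ i := by
    intro i
    have h1 := habs i
    have h2 := neg_abs_le (d i)
    simp only [hΦdef]
    linarith
  have hΦeq : ∀ i, Φ i * (Φ i - d i) = γ := by
    intro i
    simp only [hΦdef]
    linear_combination (hs i) / 4
  have hPPT : P * Pᵀ = 1 := mul_eq_one_comm.mp hP
  have hdetP : Pᵀ.det * P.det = 1 := by rw [← Matrix.det_mul, hP, Matrix.det_one]
  set Zs := P * Matrix.diagonal Φ * Pᵀ with hZs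
  have hinjT : ∀ x : Fin r → ℝ, x ≠ 0 → Pᵀ *ᵥ x ≠ 0 := by
    intro x hx h
    apply hx
    have h2 : P *ᵥ (Pᵀ *ᵥ x) = x := by
      rw [Matrix.mulVec_mulVec, hPPT, Matrix.one_mulVec]
    rw [h, Matrix.mulVec_zero] at h2
    exact h2.symm
  have hinjP : ∀ x : Fin r → ℝ, x ≠ 0 → P *ᵥ x ≠ 0 := by
    intro x hx h
    apply hx
    have h2 : Pᵀ *ᵥ (P *ᵥ x) = x := by
      rw [Matrix.mulVec_mulVec, hP, Matrix.one_mulVec]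
    rw [h, Matrix.mulVec_zero] at h2
    exact h2.symm
  have hDpos : (Matrix.diagonal Φ).PosDef := Matrix.PosDef.diagonal hΦp
  have hZsPos : Zs.PosDef := by
    have := posdef_congr (Matrix.diagonal Φ) Pᵀ hDpos hinjT
    simpa [Matrix.transpose_transpose] using this
  have hdetZs : Zs.det = ∏ i, Φ i := by
    rw [hZs, Matrix.det_mul, Matrix.det_mul, Matrix.det_diagonal]
    linear_combination (∏ i, Φ i) * hdetP
  have hFs : ∑ i, ∑ j, (Zs i j - A i j)^2 = ∑ i, (Φ i - d i)^2 := by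
    have hmat : Zs - A = P * Matrix.diagonal (fun i => Φ i - d i) * Pᵀ := by
      rw [hZs, hA, ← Matrix.sub_mul, ← Matrix.mul_sub, Matrix.diagonal_sub]
    calc ∑ i, ∑ j, (Zs i j - A i j)^2
        = ∑ i, ∑ j, ((P * Matrix.diagonal (fun i => Φ i - d i) * Pᵀ) i j)^2 := by
          simp only [← Matrix.sub_apply, hmat]
      _ = ∑ i, ∑ j, ((Matrix.diagonal (fun i => Φ i - d i)) i j)^2 := frob P hP _
      _ = ∑ i, (Φ i - d i)^2 := diag_sq_sum _
  refine ⟨hZsPos, fun Z hZ => ?_⟩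
  set W := Pᵀ * Z * P with hWdef
  have hWpos : W.PosDef := posdef_congr Z P hZ hinjP
  have hZW : P * W * Pᵀ = Z := by
    rw [hWdef]
    have h3 : P * (Pᵀ * Z * P) * Pᵀ = (P * Pᵀ) * Z * (P * Pᵀ) := by
      simp only [Matrix.mul_assoc]
    rw [h3, hPPT, Matrix.one_mul, Matrix.mul_one]
  have hdetZ : Z.det = W.det := by
    rw [hWdef, Matrix.det_mul, Matrix.det_mul]
    linear_combination - Z.det * hdetP
  have hFZ : ∑ i, ∑ j, (Z i j - A i j)^2
      = ∑ i, ∑ j, (W i j - Matrix.diagonal d i j)^2 := by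
    have hmat : Z - A = P * (W - Matrix.diagonal d) * Pᵀ := by
      rw [hA, ← hZW, ← Matrix.sub_mul, ← Matrix.mul_sub]
    calc ∑ i, ∑ j, (Z i j - A i j)^2
        = ∑ i, ∑ j, ((P * (W - Matrix.diagonal d) * Pᵀ) i j)^2 := by
          simp only [← Matrix.sub_apply, hmat]
      _ = ∑ i, ∑ j, ((W - Matrix.diagonal d) i j)^2 := frob P hP _
      _ = ∑ i, ∑ j, (W i j - Matrix.diagonal d i j)^2 := by
          simp only [Matrix.sub_apply]
  have hcore := core_ineq γ hγ d Φ hΦp hΦeq W hWpos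
  have hT : (0:ℝ) ≤ ∑ i, (W i i - Φ i)^2 :=
    Finset.sum_nonneg (fun i _ => sq_nonneg _)
  have hU : (0:ℝ) ≤ ∑ i, ∑ j ∈ Finset.univ.erase i, (W i j)^2 :=
    Finset.sum_nonneg (fun i _ => Finset.sum_nonneg (fun j _ => sq_nonneg _))
  constructor
  · rw [hdetZs, hFs, hdetZ, hFZ]
    linarith
  · intro heq
    rw [hdetZs, hFs, hdetZ, hFZ] at heq
    have hT0 : ∑ i, (W i i - Φ i)^2 = 0 := by linarith
    have hU0 : ∑ i, ∑ j ∈ Finset.univ.erase i, (W i j)^2 = 0 := by linarith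
    have hdiag : ∀ i, W i i = Φ i := by
      intro i
      have := (Finset.sum_eq_zero_iff_of_nonneg (fun i _ => sq_nonneg _)).mp hT0 i
        (Finset.mem_univ i)
      have := sq_eq_zero_iff.mp this
      linarith
    have hoff : ∀ i j, j ≠ i → W i j = 0 := by
      intro i j hij
      have h1 := (Finset.sum_eq_zero_iff_of_nonneg
        (fun i _ => Finset.sum_nonneg (fun j _ => sq_nonneg _))).mp hU0 i (Finset.mem_univ i)
      have h2 := (Finset.sum_eq_zero_iff_of_nonneg (fun j _ => sq_nonneg _)).mp h1 j
        (Finset.mem_erase.mpr ⟨hij, Finset.mem_univ j⟩)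
      exact sq_eq_zero_iff.mp h2
    have hWD : W = Matrix.diagonal Φ := by
      ext i j
      by_cases h : i = j
      · subst h; rw [Matrix.diagonal_apply_eq]; exact hdiag i
      · rw [Matrix.diagonal_apply_ne Φ h]
        exact hoff i j (fun hji => h hji.symm)
    rw [← hZW, hWD]
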